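/- In the Gaussian integers O = ℤ[i], let O′ := {a + 3b·i : a, b ∈ ℤ}, a subring of O, and let m := (2+i)·O. Then: (1) m is a maximal ideal of O and O/m has exactly 5 elements; (2) the ideal J of O′ generated by 5 and 1 + 3i satisfies J = m ∩ O′ and its extension to O is m, i.e. the ideal of O generated by 5 and 1 + 3i equals m; (3) J is not a principal ideal of O′. -/

import Mathlib

open Zsqrtd

/-- The order `O′ = ℤ + 3iℤ = {a + 3b·i : a, b ∈ ℤ}` inside the Gaussian integers. -/
def Oo : Subring GaussianInt where
  carrier := {z | (3 : ℤ) ∣ z.im}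
  zero_mem' := ⟨0, rfl⟩
  one_mem' := ⟨0, rfl⟩
  add_mem' := by
    intro a b ha hb
    exact dvd_add ha hb
  neg_mem' := by
    intro a ha
    simpa using ha.neg_right
  mul_mem' := by
    intro a b ha hb
    simp only [Set.mem_setOf_eq, Zsqrtd.im_mul] at *
    exact dvd_add (hb.mul_left _) (ha.mul_right _)

/-- The maximal ideal `m = (2+i)·O` of the Gaussian integers. -/
def mIdeal : Ideal GaussianInt := Ideal.span {(⟨2, 1⟩ : GaussianInt)}

/-- `5` as an element of `O′`. -/
def f5 : Oo := ⟨(⟨5, 0⟩ : GaussianInt), ⟨0, rfl⟩⟩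

/-- `1 + 3i` as an element of `O′`. -/
def f13 : Oo := ⟨(⟨1, 3⟩ : GaussianInt), ⟨1, rfl⟩⟩

/-- The ideal `J = (5, 1+3i)` of `O′`. -/
def J : Ideal Oo := Ideal.span {f5, f13}

/-- The mod-`(2+i)` map `ℤ[i] → ℤ/5`, sending `i` to `3`. -/
noncomputable def phi : GaussianInt →+* ZMod 5 := Zsqrtd.lift ⟨3, by decide⟩

lemma phi_apply (z : GaussianInt) : phi z = (z.re : ZMod 5) + z.im * 3 := rfl

lemma mem_mIdeal_iff (z : GaussianInt) : z ∈ mIdeal ↔ (5 : ℤ) ∣ z.re + 3 * z.im := by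
  rw [mIdeal, Ideal.mem_span_singleton]
  constructor
  · rintro ⟨c, rfl⟩
    exact ⟨c.re + c.im, by simp [Zsqrtd.re_mul, Zsqrtd.im_mul]; ring⟩
  · rintro ⟨k, hk⟩
    refine ⟨⟨2 * k - z.im, z.im - k⟩, ?_⟩
    rw [Zsqrtd.ext_iff]
    constructor <;> simp [Zsqrtd.re_mul, Zsqrtd.im_mul] <;> omega

lemma ker_phi : RingHom.ker phi = mIdeal := by
  ext z
  have h : ((z.re + 3 * z.im : ℤ) : ZMod 5) = phi z := by
    rw [phi_apply]; push_cast; ring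
  rw [RingHom.mem_ker, ← h, ZMod.intCast_zmod_eq_zero_iff_dvd, mem_mIdeal_iff]
  norm_num

lemma phi_surj : Function.Surjective phi := fun n => by
  obtain ⟨k, rfl⟩ := ZMod.intCast_surjective n
  exact ⟨k, map_intCast phi k⟩

noncomputable def quotEquiv : (GaussianInt ⧸ mIdeal) ≃+* ZMod 5 :=
  (Ideal.quotEquivOfEq ker_phi.symm).trans (RingHom.quotientKerEquivOfSurjective phi_surj)

lemma J_eq_comap : J = Ideal.comap Oo.subtype mIdeal := by
  apply _root_.le_antisymm
  · rw [J, Ideal.span_le]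
    rintro x (rfl | rfl) <;>
      · show Oo.subtype _ ∈ mIdeal
        rw [mem_mIdeal_iff]
        decide
  · intro x hx
    have hx' : x.val ∈ mIdeal := hx
    rw [mem_mIdeal_iff] at hx'
    obtain ⟨c, hc⟩ := x.2
    obtain ⟨k, hk⟩ : (5 : ℤ) ∣ c - x.val.re := by omega
    rw [J, Ideal.mem_span_pair]
    refine ⟨⟨⟨0, 3 * k⟩, ⟨k, rfl⟩⟩, ⟨⟨x.val.re, 0⟩, dvd_zero 3⟩, ?_⟩
    apply Subtype.ext
    show (⟨0, 3 * k⟩ : GaussianInt) * ⟨5, 0⟩ + ⟨x.val.re, 0⟩ * ⟨1, 3⟩ = x.val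
    rw [Zsqrtd.ext_iff]
    constructor <;> simp [Zsqrtd.re_mul, Zsqrtd.im_mul] <;> omega

/-- In `O = ℤ[i]` with order `O′ = ℤ + 3iℤ` and `m = (2+i)O`:
(1) `m` is maximal and `O/m` has exactly `5` elements;
(2) the ideal `J = (5, 1+3i)` of `O′` satisfies `J = m ∩ O′`, and the ideal of `O`
generated by `5` and `1+3i` equals `m`;
(3) `J` is not a principal ideal of `O′`. -/
theorem stmt13 :
    (mIdeal.IsMaximal ∧ Nat.card (GaussianInt ⧸ mIdeal) = 5) ∧
    (J = Ideal.comap Oo.subtype mIdeal ∧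
      Ideal.span {(⟨5, 0⟩ : GaussianInt), (⟨1, 3⟩ : GaussianInt)} = mIdeal) ∧
    ¬ J.IsPrincipal := by
  haveI : Fact (Nat.Prime 5) := ⟨by norm_num⟩
  have hmax : mIdeal.IsMaximal :=
    Ideal.Quotient.maximal_of_isField _
      (quotEquiv.toMulEquiv.isField (Field.toIsField (ZMod 5)))
  refine ⟨⟨hmax, ?_⟩, ⟨J_eq_comap, ?_⟩, ?_⟩
  · rw [Nat.card_congr quotEquiv.toEquiv, Nat.card_zmod]
  · apply _root_.le_antisymm
    · rw [Ideal.span_le]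
      rintro z (rfl | rfl) <;> · rw [SetLike.mem_coe, mem_mIdeal_iff]; decide
    · rw [mIdeal, Ideal.span_le]
      rintro z rfl
      rw [SetLike.mem_coe, Ideal.mem_span_pair]
      refine ⟨1, ⟨0, 1⟩, ?_⟩
      rw [Zsqrtd.ext_iff]
      constructor <;> simp [Zsqrtd.re_mul, Zsqrtd.im_mul]
  · rintro ⟨g, hg⟩
    -- `g` divides `5` and `1 + 3i`
    have h5 : f5 ∈ J := Ideal.subset_span (by simp)
    have h13 : f13 ∈ J := Ideal.subset_span (by simp)
    rw [hg, Ideal.submodule_span_eq, Ideal.mem_span_singleton'] at h5 h13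
    obtain ⟨h, hh⟩ := h5
    obtain ⟨k, hk⟩ := h13
    have hh' : h.val * g.val = (⟨5, 0⟩ : GaussianInt) := congrArg Subtype.val hh
    have hk' : k.val * g.val = (⟨1, 3⟩ : GaussianInt) := congrArg Subtype.val hk
    have hn25 : Zsqrtd.norm h.val * Zsqrtd.norm g.val = 25 := by
      rw [← Zsqrtd.norm_mul, hh']; decide
    have hn10 : Zsqrtd.norm k.val * Zsqrtd.norm g.val = 10 := by
      rw [← Zsqrtd.norm_mul, hk']; decide
    have hdvd : Zsqrtd.norm g.val ∣ 5 := by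
      have d25 : Zsqrtd.norm g.val ∣ 25 := ⟨_, hn25.symm.trans (mul_comm _ _)⟩
      have d10 : Zsqrtd.norm g.val ∣ 10 := ⟨_, hn10.symm.trans (mul_comm _ _)⟩
      have : (5 : ℤ) = 25 - 2 * 10 := by norm_num
      rw [this]
      exact dvd_sub d25 (d10.mul_left 2)
    obtain ⟨b, hb⟩ := g.2
    set a := g.val.re with ha
    have hnorm : Zsqrtd.norm g.val = a * a + 9 * (b * b) := by
      rw [Zsqrtd.norm_def, hb]; ring
    rw [hnorm] at hdvd
    have hle : a * a + 9 * (b * b) ≤ 5 := by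
      refine Int.le_of_dvd (by norm_num) hdvd
    have hb0 : b = 0 := by
      by_contra hb0
      have h1 : 0 < b * b := mul_self_pos.mpr hb0
      nlinarith [mul_self_nonneg a]
    rw [hb0] at hdvd hle
    obtain ⟨m, hm⟩ := hdvd
    have ha2 : a ≤ 2 := by nlinarith
    have ha2' : -2 ≤ a := by nlinarith
    have hval : a = 1 ∨ a = -1 := by
      interval_cases a <;> omega
    -- hence `g = ±1`, so `1 ∈ J`, contradicting `1 ∉ m`
    have hgval : g.val = (⟨1, 0⟩ : GaussianInt) ∨ g.val = (⟨-1, 0⟩ : GaussianInt) := by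
      rcases hval with h1 | h1
      · left; rw [Zsqrtd.ext_iff]; exact ⟨h1, by simp [hb, hb0]⟩
      · right; rw [Zsqrtd.ext_iff]; exact ⟨h1, by simp [hb, hb0]⟩
    have h1J : (1 : Oo) ∈ J := by
      rw [hg, Ideal.submodule_span_eq, Ideal.mem_span_singleton']
      rcases hgval with h1 | h1
      · exact ⟨1, Subtype.ext (by show 1 * g.val = 1; rw [h1]; decide)⟩
      · exact ⟨-1, Subtype.ext (by show (-1 : Oo).val * g.val = 1; rw [h1]; decide)⟩
    rw [J_eq_comap] at h1J
    have : (1 : GaussianInt) ∈ mIdeal := h1J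
    rw [mem_mIdeal_iff] at this
    norm_num at this
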